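/- Let τ = (4 − √7)/9. For every ε > 0 there exist a positive integer n and simple graphs G₁, G₂, G₃ on a common set of n vertices such that there is no rainbow triangle and |E(Gᵢ)| > ((1 + τ²)/4 − ε)·n² for 1 ≤ i ≤ 3. -/

import Mathlib

/-- A rainbow triangle for graphs `G₁ G₂ G₃` on a common vertex set: distinct vertices
`v₁ v₂ v₃` with `v₁v₂ ∈ E(G₁)`, `v₂v₃ ∈ E(G₂)`, `v₃v₁ ∈ E(G₃)`. -/
def HasRainbowTriangle {V : Type*} (G₁ G₂ G₃ : SimpleGraph V) : Prop :=
  ∃ v₁ v₂ v₃ : V, v₁ ≠ v₂ ∧ v₂ ≠ v₃ ∧ v₃ ≠ v₁ ∧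
    G₁.Adj v₁ v₂ ∧ G₂.Adj v₂ v₃ ∧ G₃.Adj v₃ v₁
noncomputable def tau : ℝ := (4 - Real.sqrt 7) / 9

/-- Union of two cliques on the vertex intervals `[l₁,h₁)` and `[l₂,h₂)`. -/
def pattGraph (n l₁ h₁ l₂ h₂ : ℕ) : SimpleGraph (Fin n) where
  Adj u v := u ≠ v ∧ ((l₁ ≤ u.val ∧ u.val < h₁ ∧ l₁ ≤ v.val ∧ v.val < h₁) ∨
      (l₂ ≤ u.val ∧ u.val < h₂ ∧ l₂ ≤ v.val ∧ v.val < h₂))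
  symm := ⟨by intro u v ⟨h1, h2⟩; exact ⟨h1.symm, by tauto⟩⟩
  loopless := ⟨fun v h => h.1 rfl⟩

/-- Complete graph minus the clique on `[0,a)`. -/
def coGraph (n a : ℕ) : SimpleGraph (Fin n) where
  Adj u v := u ≠ v ∧ ¬(u.val < a ∧ v.val < a)
  symm := ⟨by intro u v ⟨h1, h2⟩; exact ⟨h1.symm, by tauto⟩⟩
  loopless := ⟨fun v h => h.1 rfl⟩

instance pattGraph.instDec (n l₁ h₁ l₂ h₂ : ℕ) :
    DecidableRel (pattGraph n l₁ h₁ l₂ h₂).Adj := fun _ _ => instDecidableAnd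

instance coGraph.instDec (n a : ℕ) : DecidableRel (coGraph n a).Adj :=
  fun _ _ => instDecidableAnd

lemma card_filter_fin (n : ℕ) (p : ℕ → Prop) [DecidablePred p] :
    ((Finset.univ : Finset (Fin n)).filter (fun u => p u.val)).card
      = ((Finset.range n).filter p).card := by
  rw [← Finset.card_attachFin ((Finset.range n).filter p)
    (fun m hm => Finset.mem_range.mp (Finset.mem_filter.mp hm).1)]
  congr 1
  ext u
  simp [Finset.mem_attachFin, u.isLt]

lemma deg_sum_bound {n : ℕ} (G : SimpleGraph (Fin n)) [DecidableRel G.Adj]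
    (S : Finset (Fin n)) (f : Fin n → ℕ) (h : ∀ v ∈ S, f v ≤ G.degree v) :
    ∑ v ∈ S, f v ≤ 2 * G.edgeFinset.card := by
  calc ∑ v ∈ S, f v ≤ ∑ v ∈ S, G.degree v := Finset.sum_le_sum h
    _ ≤ ∑ v ∈ Finset.univ, G.degree v :=
        Finset.sum_le_sum_of_subset (Finset.subset_univ S)
    _ = 2 * G.edgeFinset.card := G.sum_degrees_eq_twice_card_edges

lemma degree_ge_of_subset {n : ℕ} (G : SimpleGraph (Fin n)) [DecidableRel G.Adj]
    (S : Finset (Fin n)) (v : Fin n) (hS : ∀ u ∈ S, G.Adj v u) :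
    S.card ≤ G.degree v := by
  have hsub : S ⊆ G.neighborFinset v := by
    intro u hu
    rw [SimpleGraph.mem_neighborFinset]
    exact hS u hu
  calc S.card ≤ (G.neighborFinset v).card := Finset.card_le_card hsub
    _ = G.degree v := rfl

lemma degree_ge_of_clique {n : ℕ} (G : SimpleGraph (Fin n)) [DecidableRel G.Adj]
    (S : Finset (Fin n)) (v : Fin n) (hv : v ∈ S)
    (hS : ∀ u ∈ S, u ≠ v → G.Adj v u) :
    S.card - 1 ≤ G.degree v := by
  have h := degree_ge_of_subset G (S.erase v) v (fun u hu =>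
    hS u (Finset.mem_of_mem_erase hu) (Finset.ne_of_mem_erase hu))
  rwa [Finset.card_erase_of_mem hv] at h

lemma two_cliques_bound {n : ℕ} (G : SimpleGraph (Fin n)) [DecidableRel G.Adj]
    (S T : Finset (Fin n)) (hd : Disjoint S T)
    (hS : ∀ v ∈ S, ∀ u ∈ S, u ≠ v → G.Adj v u)
    (hT : ∀ v ∈ T, ∀ u ∈ T, u ≠ v → G.Adj v u) :
    S.card * (S.card - 1) + T.card * (T.card - 1) ≤ 2 * G.edgeFinset.card := by
  have h := deg_sum_bound G (S ∪ T)
    (fun v => if v ∈ S then S.card - 1 else T.card - 1) ?_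
  · rw [Finset.sum_union hd] at h
    have e1 : ∑ v ∈ S, (if v ∈ S then S.card - 1 else T.card - 1) = S.card * (S.card - 1) := by
      rw [Finset.sum_congr rfl (fun v hv => if_pos hv), Finset.sum_const, smul_eq_mul]
    have e2 : ∑ v ∈ T, (if v ∈ S then S.card - 1 else T.card - 1) = T.card * (T.card - 1) := by
      rw [Finset.sum_congr rfl (fun v hv => if_neg (Finset.disjoint_right.mp hd hv)),
        Finset.sum_const, smul_eq_mul]
    rwa [e1, e2] at h
  · intro v hv
    by_cases hvS : v ∈ S
    · rw [if_pos hvS]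
      exact degree_ge_of_clique G S v hvS (hS v hvS)
    · rw [if_neg hvS]
      have hvT : v ∈ T := (Finset.mem_union.mp hv).resolve_left hvS
      exact degree_ge_of_clique G T v hvT (hT v hvT)

set_option maxHeartbeats 2000000 in
theorem rainbow_mantel_sharp (ε : ℝ) (hε : 0 < ε) :
    ∃ n : ℕ, 0 < n ∧ ∃ G₁ G₂ G₃ : SimpleGraph (Fin n),
      ¬ HasRainbowTriangle G₁ G₂ G₃ ∧
      (G₁.edgeSet.ncard : ℝ) > ((1 + tau ^ 2) / 4 - ε) * (n : ℝ) ^ 2 ∧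
      (G₂.edgeSet.ncard : ℝ) > ((1 + tau ^ 2) / 4 - ε) * (n : ℝ) ^ 2 ∧
      (G₃.edgeSet.ncard : ℝ) > ((1 + tau ^ 2) / 4 - ε) * (n : ℝ) ^ 2 := by
  -- basic facts about tau
  have h7 : Real.sqrt 7 ^ 2 = 7 := Real.sq_sqrt (by norm_num)
  have h7' : (0:ℝ) ≤ Real.sqrt 7 := Real.sqrt_nonneg 7
  have hs3 : Real.sqrt 7 < 3 := by nlinarith
  have hs2 : (2:ℝ) < Real.sqrt 7 := by nlinarith
  have htdef : tau = (4 - Real.sqrt 7) / 9 := rfl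
  have ht : 9 * tau ^ 2 - 8 * tau + 1 = 0 := by rw [htdef]; nlinarith
  have ht1 : 1/9 ≤ tau := by rw [htdef]; nlinarith
  have ht2 : tau ≤ 2/9 := by rw [htdef]; nlinarith
  have ht0 : (0:ℝ) < tau := lt_of_lt_of_le (by norm_num) ht1
  -- choose n
  obtain ⟨n, hn9, hnε⟩ : ∃ n : ℕ, 9 ≤ n ∧ 4 < ε * n := by
    refine ⟨max 9 (⌈(4:ℝ)/ε⌉₊ + 1), le_max_left _ _, ?_⟩
    have h1 : (4:ℝ)/ε < (⌈(4:ℝ)/ε⌉₊ + 1 : ℕ) := by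
      push_cast
      exact lt_of_le_of_lt (Nat.le_ceil _) (by linarith)
    have h2 : ((⌈(4:ℝ)/ε⌉₊ + 1 : ℕ) : ℝ) ≤ ((max 9 (⌈(4:ℝ)/ε⌉₊ + 1) : ℕ) : ℝ) := by
      exact_mod_cast le_max_right 9 (⌈(4:ℝ)/ε⌉₊ + 1)
    have h3 : (4:ℝ)/ε < ((max 9 (⌈(4:ℝ)/ε⌉₊ + 1) : ℕ) : ℝ) := lt_of_lt_of_le h1 h2
    calc (4:ℝ) = (4/ε) * ε := by field_simp
      _ < _ * ε := mul_lt_mul_of_pos_right h3 hε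
      _ = ε * _ := mul_comm _ _
  have hnR : (9:ℝ) ≤ (n:ℝ) := by exact_mod_cast hn9
  have hn0 : 0 < n := lt_of_lt_of_le (by norm_num) hn9
  -- sizes
  obtain ⟨b, hb_le, hb_gt⟩ : ∃ b : ℕ, (b:ℝ) ≤ tau * n ∧ tau * n < b + 1 :=
    ⟨⌊tau * n⌋₊, Nat.floor_le (by positivity), Nat.lt_floor_add_one _⟩
  have hb1 : 1 ≤ b := by
    have h1 : (1:ℝ) ≤ tau * n := by nlinarith
    have h2 : (0:ℝ) < (b:ℝ) := by linarith
    have h3 : 0 < b := by exact_mod_cast h2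
    omega
  have h2b : 2 * b < n := by
    have : (2 * b : ℝ) < n := by nlinarith
    exact_mod_cast this
  obtain ⟨a, hab⟩ : ∃ a : ℕ, a + 2 * b = n := ⟨n - 2 * b, by omega⟩
  have ha1 : 1 ≤ a := by omega
  have haR : (a:ℝ) = (n:ℝ) - 2 * b := by
    push_cast [← hab]
    ring
  -- the graphs
  set G₁ : SimpleGraph (Fin n) := pattGraph n 0 a a (a + b) with hG1
  set G₂ : SimpleGraph (Fin n) := pattGraph n 0 a (a + b) n with hG2
  set G₃ : SimpleGraph (Fin n) := coGraph n a with hG3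
  -- the class Finsets
  set SA : Finset (Fin n) := Finset.univ.filter (fun u : Fin n => u.val < a) with hSAdef
  set SB : Finset (Fin n) := Finset.univ.filter (fun u : Fin n => a ≤ u.val ∧ u.val < a + b) with hSBdef
  set SC : Finset (Fin n) := Finset.univ.filter (fun u : Fin n => a + b ≤ u.val) with hSCdef
  set SD : Finset (Fin n) := Finset.univ.filter (fun u : Fin n => a ≤ u.val) with hSDdef
  have hSA : SA.card = a := by
    rw [hSAdef, card_filter_fin n (fun m => m < a)]
    rw [show (Finset.range n).filter (fun m => m < a) = Finset.range a by
      ext m; simp; omega]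
    exact Finset.card_range a
  have hSB : SB.card = b := by
    rw [hSBdef, card_filter_fin n (fun m => a ≤ m ∧ m < a + b)]
    rw [show (Finset.range n).filter (fun m => a ≤ m ∧ m < a + b) = Finset.Ico a (a + b) by
      ext m; simp [Finset.mem_Ico]; omega]
    rw [Nat.card_Ico]; omega
  have hSC : SC.card = b := by
    rw [hSCdef, card_filter_fin n (fun m => a + b ≤ m)]
    rw [show (Finset.range n).filter (fun m => a + b ≤ m) = Finset.Ico (a + b) n by
      ext m; simp [Finset.mem_Ico]; omega]
    rw [Nat.card_Ico]; omega
  have hSD : SD.card = 2 * b := by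
    rw [hSDdef, card_filter_fin n (fun m => a ≤ m)]
    rw [show (Finset.range n).filter (fun m => a ≤ m) = Finset.Ico a n by
      ext m; simp [Finset.mem_Ico]; omega]
    rw [Nat.card_Ico]; omega
  -- edge-count bounds (natural numbers)
  have hE1 : a * (a - 1) + b * (b - 1) ≤ 2 * G₁.edgeFinset.card := by
    have h := two_cliques_bound G₁ SA SB ?_ ?_ ?_
    · rwa [hSA, hSB] at h
    · refine Finset.disjoint_left.mpr ?_
      intro u hu hu'
      rw [hSAdef, Finset.mem_filter] at hu
      rw [hSBdef, Finset.mem_filter] at hu'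
      omega
    · intro v hv u hu hne
      rw [hSAdef, Finset.mem_filter] at hv hu
      exact ⟨hne.symm, Or.inl ⟨Nat.zero_le _, hv.2, Nat.zero_le _, hu.2⟩⟩
    · intro v hv u hu hne
      rw [hSBdef, Finset.mem_filter] at hv hu
      exact ⟨hne.symm, Or.inr ⟨hv.2.1, hv.2.2, hu.2.1, hu.2.2⟩⟩
  have hE2 : a * (a - 1) + b * (b - 1) ≤ 2 * G₂.edgeFinset.card := by
    have h := two_cliques_bound G₂ SA SC ?_ ?_ ?_
    · rwa [hSA, hSC] at h
    · refine Finset.disjoint_left.mpr ?_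
      intro u hu hu'
      rw [hSAdef, Finset.mem_filter] at hu
      rw [hSCdef, Finset.mem_filter] at hu'
      omega
    · intro v hv u hu hne
      rw [hSAdef, Finset.mem_filter] at hv hu
      exact ⟨hne.symm, Or.inl ⟨Nat.zero_le _, hv.2, Nat.zero_le _, hu.2⟩⟩
    · intro v hv u hu hne
      rw [hSCdef, Finset.mem_filter] at hv hu
      exact ⟨hne.symm, Or.inr ⟨hv.2, v.isLt, hu.2, u.isLt⟩⟩
  have hE3 : a * (2 * b) + (2 * b) * (n - 1) ≤ 2 * G₃.edgeFinset.card := by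
    have h := deg_sum_bound G₃ Finset.univ
      (fun v => if v.val < a then 2 * b else n - 1) ?_
    · rw [← Finset.sum_filter_add_sum_filter_not Finset.univ (fun v : Fin n => v.val < a)] at h
      have e1 : ∑ v ∈ Finset.univ.filter (fun v : Fin n => v.val < a),
          (if v.val < a then 2 * b else n - 1) = a * (2 * b) := by
        rw [Finset.sum_congr rfl (fun v hv => if_pos (Finset.mem_filter.mp hv).2),
          Finset.sum_const, smul_eq_mul, ← hSAdef, hSA]
      have e2 : ∑ v ∈ Finset.univ.filter (fun v : Fin n => ¬ v.val < a),
          (if v.val < a then 2 * b else n - 1) = (2 * b) * (n - 1) := by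
        rw [Finset.sum_congr rfl (fun v hv => if_neg (Finset.mem_filter.mp hv).2),
          Finset.sum_const, smul_eq_mul]
        congr 1
        rw [card_filter_fin n (fun m => ¬ m < a)]
        rw [show (Finset.range n).filter (fun m => ¬ m < a) = Finset.Ico a n by
          ext m; simp [Finset.mem_Ico]; omega]
        rw [Nat.card_Ico]; omega
      rwa [e1, e2] at h
    · intro v _
      by_cases hva : v.val < a
      · rw [if_pos hva]
        have h' := degree_ge_of_subset G₃ SD v ?_
        · rwa [hSD] at h'
        · intro u hu
          rw [hSDdef, Finset.mem_filter] at hu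
          exact ⟨Fin.ne_of_val_ne (by omega), by omega⟩
      · rw [if_neg hva]
        have h' := degree_ge_of_subset G₃ (Finset.univ.erase v) v ?_
        · rwa [Finset.card_erase_of_mem (Finset.mem_univ v), Finset.card_univ,
            Fintype.card_fin] at h'
        · intro u hu
          exact ⟨(Finset.ne_of_mem_erase hu).symm, by omega⟩
  -- pass to real numbers
  have hcard1 : (G₁.edgeSet.ncard : ℝ) = (G₁.edgeFinset.card : ℝ) := by
    have := Set.ncard_coe_finset G₁.edgeFinset
    rw [SimpleGraph.coe_edgeFinset] at this
    exact_mod_cast this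
  have hcard2 : (G₂.edgeSet.ncard : ℝ) = (G₂.edgeFinset.card : ℝ) := by
    have := Set.ncard_coe_finset G₂.edgeFinset
    rw [SimpleGraph.coe_edgeFinset] at this
    exact_mod_cast this
  have hcard3 : (G₃.edgeSet.ncard : ℝ) = (G₃.edgeFinset.card : ℝ) := by
    have := Set.ncard_coe_finset G₃.edgeFinset
    rw [SimpleGraph.coe_edgeFinset] at this
    exact_mod_cast this
  have hkey : (0:ℝ) ≤ (tau * n - b) * (4 * n - 5 * (b + tau * n)) := by
    apply mul_nonneg (by linarith)
    nlinarith
  have hkey3 : (0:ℝ) ≤ (b + 1 - tau * n) * (n - b - tau * n) := by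
    apply mul_nonneg (by linarith)
    nlinarith
  have hεn2 : 8 * (n:ℝ) < 2 * ε * n ^ 2 := by nlinarith
  have hbR0 : (0:ℝ) ≤ (b:ℝ) := Nat.cast_nonneg b
  have main12 : ((1 + tau^2)/4 - ε) * (n:ℝ)^2 <
      (((n:ℝ) - 2*b) * (((n:ℝ) - 2*b) - 1) + (b:ℝ) * ((b:ℝ) - 1)) / 2 := by
    nlinarith [hkey, ht, hεn2, hb_le]
  have main3 : ((1 + tau^2)/4 - ε) * (n:ℝ)^2 <
      (((n:ℝ) - 2*b) * (2*(b:ℝ)) + (2*(b:ℝ)) * ((n:ℝ) - 1)) / 2 := by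
    nlinarith [hkey3, ht, hεn2, hb_le, hb_gt]
  refine ⟨n, hn0, G₁, G₂, G₃, ?_, ?_, ?_, ?_⟩
  · -- no rainbow triangle
    rintro ⟨v₁, v₂, v₃, h12, h23, h31, ha1', ha2', ha3'⟩
    obtain ⟨-, hc1⟩ := ha1'
    obtain ⟨-, hc2⟩ := ha2'
    obtain ⟨-, hc3⟩ := ha3'
    simp only [not_and] at hc3
    omega
  · rw [hcard1]
    have h := hE1
    have hc : ((a * (a - 1) + b * (b - 1) : ℕ) : ℝ) ≤ 2 * (G₁.edgeFinset.card : ℝ) := by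
      exact_mod_cast h
    rw [Nat.cast_add, Nat.cast_mul, Nat.cast_mul, Nat.cast_sub ha1, Nat.cast_sub hb1] at hc
    push_cast at hc
    rw [haR] at hc
    linarith [main12]
  · rw [hcard2]
    have h := hE2
    have hc : ((a * (a - 1) + b * (b - 1) : ℕ) : ℝ) ≤ 2 * (G₂.edgeFinset.card : ℝ) := by
      exact_mod_cast h
    rw [Nat.cast_add, Nat.cast_mul, Nat.cast_mul, Nat.cast_sub ha1, Nat.cast_sub hb1] at hc
    push_cast at hc
    rw [haR] at hc
    linarith [main12]
  · rw [hcard3]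
    have h1 : ((a * (2 * b) + 2 * b * (n - 1) : ℕ) : ℝ)
        ≤ ((2 * G₃.edgeFinset.card : ℕ) : ℝ) := Nat.cast_le.mpr hE3
    push_cast [Nat.cast_sub (show 1 ≤ n by omega)] at h1
    rw [haR] at h1
    linarith [main3]
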